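/- Newton's identity (low powers): Let R be a commutative ring and let s be a multiset of elements of R with card s = n. Then for every k with 1 ≤ k ≤ n, the k-th power sum satisfies p_k(s) = Σ_{i=1}^{k-1} (-1)^{i+1} · e_i(s) · p_{k-i}(s) + (-1)^{k+1} · k · e_k(s). (In Euler's notation, with the monic equation x^n - A x^{n-1} + B x^{n-2} - ... = 0 whose root multiset is s, this reads ∫α^k = A∫α^{k-1} - B∫α^{k-2} + C∫α^{k-3} - ... ± k·(k-th coefficient).) -/

import Mathlib

/-- The `k`-th power sum of a multiset `s`: the sum of the `k`-th powers of its elements. -/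
def Multiset.psum {R : Type*} [CommRing R] (s : Multiset R) (k : ℕ) : R :=
  (s.map (· ^ k)).sum

/-- Newton's identity (low powers): for a multiset `s` of cardinality `n` and `1 ≤ k ≤ n`,
`p_k(s) = Σ_{i=1}^{k-1} (-1)^(i+1) e_i(s) p_{k-i}(s) + (-1)^(k+1) k e_k(s)`. -/
theorem newton_identity_low {R : Type*} [CommRing R] (s : Multiset R) (n k : ℕ)
    (hcard : Multiset.card s = n) (hk1 : 1 ≤ k) (hkn : k ≤ n) :
    s.psum k =
      ∑ i ∈ Finset.Ico 1 k, (-1 : R) ^ (i + 1) * s.esymm i * s.psum (k - i)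
        + (-1 : R) ^ (k + 1) * (k : R) * s.esymm k := by
  classical
  -- realize `s` as the image of a function `Fin n → R`
  obtain ⟨l, rfl⟩ : ∃ l : List R, s = ↑l := ⟨s.toList, (s.coe_toList).symm⟩
  have hlen : l.length = n := by simpa using hcard
  subst hlen
  set f : Fin l.length → R := l.get with hf
  have hs : (l : Multiset R) = (Finset.univ.val.map f) := by
    have : List.ofFn f = l := List.ofFn_get l
    conv_lhs => rw [← this]
    simp [List.ofFn_eq_map, Finset.univ, Fintype.elems]
  have key := congrArg (MvPolynomial.aeval f)
    (MvPolynomial.psum_eq_mul_esymm_sub_sum (Fin l.length) R k hk1)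
  have haev_psum : ∀ m : ℕ, MvPolynomial.aeval f (MvPolynomial.psum (Fin l.length) R m)
      = (l : Multiset R).psum m := by
    intro m
    simp [MvPolynomial.psum, Multiset.psum, hs, Multiset.map_map, Finset.sum_eq_multiset_sum,
      map_list_sum, List.map_ofFn, Function.comp_def]
  have haev_esymm : ∀ m : ℕ, MvPolynomial.aeval f (MvPolynomial.esymm (Fin l.length) R m)
      = (l : Multiset R).esymm m := by
    intro m
    rw [MvPolynomial.aeval_esymm_eq_multiset_esymm, hs]
  simp only [map_sub, map_mul, map_pow, map_neg, map_one, map_natCast, map_sum,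
    haev_psum, haev_esymm] at key
  rw [key, sub_eq_add_neg, add_comm]
  congr 1
  rw [← Finset.sum_neg_distrib]
  refine Finset.sum_nbij' (fun a => a.1) (fun i => (i, k - i)) ?_ ?_ ?_ ?_ ?_
  · rintro ⟨a, b⟩ h
    simp only [Finset.mem_filter, Finset.HasAntidiagonal.mem_antidiagonal, Set.mem_Ioo] at h
    simp [Finset.mem_Ico]
    omega
  · intro i hi
    simp only [Finset.mem_Ico] at hi
    simp only [Finset.mem_filter, Finset.HasAntidiagonal.mem_antidiagonal, Set.mem_Ioo]
    omega
  · rintro ⟨a, b⟩ h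
    simp only [Finset.mem_filter, Finset.HasAntidiagonal.mem_antidiagonal] at h
    simp; omega
  · intro i hi; rfl
  · rintro ⟨a, b⟩ h
    simp only [Finset.mem_filter, Finset.HasAntidiagonal.mem_antidiagonal, Set.mem_Ioo] at h
    have hb : b = k - a := by omega
    subst hb
    ring_nf
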